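/- Let G be a countable discrete group, let χ be a character on G (a normalized, conjugation-invariant, positive definite function), and let ε ≥ 0. Suppose g ∈ G is such that for every n ∈ ℕ there exist n elements g₁, …, gₙ, each conjugate to g in G, with |χ(gᵢgⱼ⁻¹)| ≤ ε for all i < j. Then |χ(g)| ≤ ε^{1/2}. -/

import Mathlib

open scoped BigOperators ComplexOrder

/-- A character on a group `G`: a normalized, conjugation-invariant,
positive definite complex-valued function. -/
def IsCharacter {G : Type*} [Group G] (χ : G → ℂ) : Prop :=
  χ 1 = 1 ∧ (∀ g h : G, χ (h * g * h⁻¹) = χ g) ∧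
    ∀ (n : ℕ) (g : Fin n → G) (α : Fin n → ℂ),
      0 ≤ ∑ i, ∑ j, (starRingEnd ℂ) (α i) * α j * χ ((g i)⁻¹ * g j)

lemma char_inv {G : Type*} [Group G] {χ : G → ℂ} (hχ : IsCharacter χ) (x : G) :
    χ x⁻¹ = (starRingEnd ℂ) (χ x) := by
  have h1 := hχ.2.2 2 ![1, x] ![1, 1]
  have h2 := hχ.2.2 2 ![1, x] ![1, Complex.I]
  simp [Fin.sum_univ_two, hχ.1] at h1 h2
  rw [Complex.le_def] at h1 h2
  simp [Complex.add_im, Complex.add_re, Complex.mul_im, Complex.mul_re] at h1 h2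
  apply Complex.ext <;>
    simp [Complex.conj_re, Complex.conj_im] <;> linarith [h1.2, h2.2]

theorem vanishing_character_from_many_conjugates
    {G : Type*} [Group G] [Countable G] (χ : G → ℂ) (hχ : IsCharacter χ)
    (ε : ℝ) (hε : 0 ≤ ε) (g : G)
    (h : ∀ n : ℕ, ∃ f : Fin n → G, (∀ i, IsConj g (f i)) ∧
      ∀ i j : Fin n, i < j → ‖χ (f i * (f j)⁻¹)‖ ≤ ε) :
    ‖χ g‖ ≤ Real.sqrt ε := by
  set c := χ g with hc
  have key : ∀ n : ℕ, 0 < n → Complex.normSq c ≤ 1 / n + ε := by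
    intro n hn
    obtain ⟨f, hconj, hbound⟩ := h n
    have hfc : ∀ i, χ (f i) = c := by
      intro i
      obtain ⟨u, hu⟩ := isConj_iff.mp (hconj i)
      rw [← hu, hχ.2.1 g u]
    have hb : ∀ i j : Fin n, i ≠ j → ‖χ (f i * (f j)⁻¹)‖ ≤ ε := by
      intro i j hij
      rcases lt_or_gt_of_ne hij with hlt | hgt
      · exact hbound i j hlt
      · have e1 : χ (f i * (f j)⁻¹) = (starRingEnd ℂ) (χ (f j * (f i)⁻¹)) := by
          rw [← char_inv hχ]; congr 1; group
        rw [e1]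
        simpa using hbound j i hgt
    set T : ℂ := ∑ i : Fin n, ∑ j : Fin n, χ (f i * (f j)⁻¹) with hT
    have hTabs : ‖T‖ ≤ n + n ^ 2 * ε := by
      have step1 : ‖T‖ ≤
          ∑ i : Fin n, ∑ j : Fin n, ‖χ (f i * (f j)⁻¹)‖ :=
        (norm_sum_le _ _).trans
          (Finset.sum_le_sum fun i _ => norm_sum_le _ _)
      have step2 : ∀ i : Fin n,
          ∑ j : Fin n, ‖χ (f i * (f j)⁻¹)‖ ≤ 1 + n * ε := by
        intro i
        have : ∑ j : Fin n, ‖χ (f i * (f j)⁻¹)‖ ≤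
            ∑ j : Fin n, ((if i = j then (1:ℝ) - ε else 0) + ε) := by
          refine Finset.sum_le_sum fun j _ => ?_
          by_cases hij : i = j
          · subst hij
            simp [hχ.1]
          · simpa [hij] using hb i j hij
        refine this.trans ?_
        rw [Finset.sum_add_distrib, Finset.sum_ite_eq]
        simp [Finset.card_univ]
        nlinarith
      calc ‖T‖ ≤ ∑ i : Fin n, (1 + n * ε) :=
            step1.trans (Finset.sum_le_sum fun i _ => step2 i)
        _ = n * (1 + n * ε) := by simp [Finset.sum_const, Finset.card_univ]; ring
        _ = n + n ^ 2 * ε := by ring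
    set g' : Fin (n+1) → G := Fin.cons 1 (fun i => (f i)⁻¹) with hg'
    set α : Fin (n+1) → ℂ := Fin.cons (-(n : ℂ) * (starRingEnd ℂ) c) (fun _ => 1) with hα
    have hS := hχ.2.2 (n + 1) g' α
    have hsum : (∑ i : Fin (n+1), ∑ j : Fin (n+1),
        (starRingEnd ℂ) (α i) * α j * χ ((g' i)⁻¹ * g' j))
        = ((-(n:ℝ) ^ 2 * Complex.normSq c : ℝ) : ℂ) + T := by
      simp only [hg', hα, Fin.sum_univ_succ, Fin.cons_zero, Fin.cons_succ, inv_one, inv_inv,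
        one_mul, mul_one, map_one, hχ.1, char_inv hχ, hfc, map_mul, map_neg, map_natCast,
        Complex.conj_conj, Finset.sum_const, Finset.card_univ, Fintype.card_fin,
        nsmul_eq_mul]
      rw [hT, Finset.sum_add_distrib]
      simp only [Finset.sum_const, Finset.card_univ, Fintype.card_fin, nsmul_eq_mul]
      rw [Complex.ofReal_mul, Complex.normSq_eq_conj_mul_self]
      push_cast
      ring
    rw [hsum, Complex.le_def] at hS
    have hre : 0 ≤ -(n:ℝ)^2 * Complex.normSq c + T.re := by
      have h0 := hS.1
      rwa [Complex.zero_re, Complex.add_re, Complex.ofReal_re] at h0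
    have hTre : T.re ≤ n + n ^ 2 * ε := (Complex.re_le_norm T).trans hTabs
    have hn' : (0:ℝ) < n := by exact_mod_cast hn
    rw [div_add' _ _ _ (ne_of_gt hn'), le_div_iff₀ hn']
    nlinarith
  have hnormSq : Complex.normSq c ≤ ε := by
    refine le_of_forall_pos_le_add fun δ hδ => ?_
    obtain ⟨n, hn⟩ := exists_nat_one_div_lt hδ
    have h1 := key (n + 1) (Nat.succ_pos n)
    push_cast at h1 hn
    linarith
  rw [Complex.norm_def]
  exact Real.sqrt_le_sqrt hnormSq
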